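/- arXiv:1004.2480 — 2 statements merged into one kernel-verified Lean document; each statement's English description precedes it below -/
import Mathlib

section
/- Let L/K be a finite separable extension of local fields and let d be an integer. Then every element of L of valuation d has non-zero trace over K if and only if both of the following hold: (1) L/K is totally ramified, and (2) d ≡ −d_{L/K} − 1 (mod [L:K]), where d_{L/K} is the valuation of the different of L/K. -/
/-- A local field structure on a field `K`: a normalized (surjective) discrete
valuation `v : K* ↠ ℤ`, extended by a junk value at `0`, with respect to which
`K` is complete. -/
structure LocalFieldStruct (K : Type) [Field K] where
  /-- the valuation; its value at `0` is irrelevant -/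
  v : K → ℤ
  v_mul : ∀ x y : K, x ≠ 0 → y ≠ 0 → v (x * y) = v x + v y
  v_add : ∀ x y : K, x ≠ 0 → y ≠ 0 → x + y ≠ 0 → min (v x) (v y) ≤ v (x + y)
  v_surj : ∀ n : ℤ, ∃ x : K, x ≠ 0 ∧ v x = n
  complete : ∀ a : ℕ → K,
      (∀ N : ℤ, ∃ M : ℕ, ∀ m : ℕ, M ≤ m → ∀ n : ℕ, M ≤ n →
        a m = a n ∨ N ≤ v (a m - a n)) →
      ∃ x : K, ∀ N : ℤ, ∃ M : ℕ, ∀ n : ℕ, M ≤ n → a n = x ∨ N ≤ v (a n - x)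

namespace LocalFieldStruct

variable {K L : Type} [Field K] [Field L]

/-- `x` lies in the valuation ring `O_K`. -/
def Integral (w : LocalFieldStruct K) (x : K) : Prop :=
  x = 0 ∨ 0 ≤ w.v x

/-- The residue characteristic of `K` is the prime `p`, i.e. `p` maps to `0`
in the residue field of the valuation ring. -/
def ResidueCharP (w : LocalFieldStruct K) (p : ℕ) : Prop :=
  p.Prime ∧ ((p : K) = 0 ∨ 0 < w.v (p : K))

/-- `K` has mixed characteristic `(0, p)`: `K` has characteristic `0` and its
residue field has characteristic `p > 0`. -/
def MixedChar (w : LocalFieldStruct K) (p : ℕ) : Prop :=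
  CharZero K ∧ p.Prime ∧ 0 < w.v (p : K)

/-- `e` is the ramification index `e_{L/K}`: the valuation of `L` restricted to
`K` is `e` times the valuation of `K`. -/
def IsRamificationIndex (wK : LocalFieldStruct K) (wL : LocalFieldStruct L)
    [Algebra K L] (e : ℕ) : Prop :=
  0 < e ∧ ∀ x : K, x ≠ 0 → wL.v (algebraMap K L x) = (e : ℤ) * wK.v x

/-- `d` is the valuation `d_{L/K}` of the different of `L/K`, characterized by
`Tr_{L/K}(𝔭_L^i) ⊆ O_K ↔ i ≥ -d` for all `i : ℤ`. -/
def IsDifferentVal (wK : LocalFieldStruct K) (wL : LocalFieldStruct L)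
    [Algebra K L] (d : ℤ) : Prop :=
  ∀ i : ℤ,
    (∀ x : L, (x ≠ 0 → i ≤ wL.v x) → wK.Integral (Algebra.trace K L x)) ↔ -d ≤ i

end LocalFieldStruct

namespace LocalFieldStruct
variable {K : Type} [Field K] (w : LocalFieldStruct K)

lemma v_one : w.v 1 = 0 := by
  have := w.v_mul 1 1 one_ne_zero one_ne_zero
  simpa using this.symm

lemma v_neg {x : K} (hx : x ≠ 0) : w.v (-x) = w.v x := by
  have h1 : w.v (-1 : K) = 0 := by
    have := w.v_mul (-1) (-1) (by norm_num) (by norm_num)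
    have h := w.v_one
    simp only [neg_mul, one_mul, neg_neg] at this
    omega
  have := w.v_mul (-1) x (by norm_num) hx
  simpa [h1] using this

lemma v_inv {x : K} (hx : x ≠ 0) : w.v x⁻¹ = - w.v x := by
  have := w.v_mul x x⁻¹ hx (inv_ne_zero hx)
  rw [mul_inv_cancel₀ hx, w.v_one] at this
  omega

lemma v_add_left {x y : K} (hx : x ≠ 0) (hy : y ≠ 0) (h : w.v x < w.v y) :
    x + y ≠ 0 ∧ w.v (x + y) = w.v x := by
  have hne : x + y ≠ 0 := by
    intro h0
    have : y = -x := by linear_combination h0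
    rw [this, w.v_neg hx] at h; omega
  have h1 := w.v_add x y hx hy hne
  refine ⟨hne, ?_⟩
  have h2 := w.v_add (x + y) (-y) hne (neg_ne_zero.mpr hy) (by simpa using hx)
  rw [w.v_neg hy] at h2
  simp only [add_neg_cancel_right] at h2
  omega

lemma v_add_min {x y : K} (hx : x ≠ 0) (hy : y ≠ 0) (h : w.v x ≠ w.v y) :
    x + y ≠ 0 ∧ w.v (x + y) = min (w.v x) (w.v y) := by
  rcases lt_or_gt_of_ne h with hlt | hlt
  · have := w.v_add_left hx hy hlt
    exact ⟨this.1, by omega⟩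
  · have := w.v_add_left hy hx hlt
    rw [add_comm] at this
    exact ⟨this.1, by omega⟩

lemma v_pow {x : K} (hx : x ≠ 0) (m : ℕ) : w.v (x ^ m) = m * w.v x := by
  induction m with
  | zero => simpa using w.v_one
  | succ n ih =>
    rw [pow_succ, w.v_mul _ _ (pow_ne_zero n hx) hx, ih]
    push_cast; ring

/-- `x = 0` or `N ≤ v x`. -/
def Big (N : ℤ) (x : K) : Prop := x = 0 ∨ N ≤ w.v x

lemma Big.mono {N N' : ℤ} {x : K} (h : w.Big N x) (hle : N' ≤ N) : w.Big N' x := by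
  rcases h with h | h
  · exact Or.inl h
  · exact Or.inr (le_trans hle h)

lemma Big.add {N : ℤ} {x y : K} (hx : w.Big N x) (hy : w.Big N y) : w.Big N (x + y) := by
  rcases hx with rfl | hx
  · simpa using hy
  rcases hy with rfl | hy
  · simpa [Big] using Or.inr hx
  by_cases hx0 : x = 0
  · simpa [Big, hx0] using Or.inr hy
  by_cases hy0 : y = 0
  · simpa [Big, hy0] using Or.inr hx
  by_cases h0 : x + y = 0
  · exact Or.inl h0
  have := w.v_add x y hx0 hy0 h0
  exact Or.inr (by omega)

lemma Big.neg {N : ℤ} {x : K} (hx : w.Big N x) : w.Big N (-x) := by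
  rcases hx with rfl | hx
  · exact Or.inl (by simp)
  by_cases h0 : x = 0
  · exact Or.inl (by simp [h0])
  · exact Or.inr (by rw [w.v_neg h0]; exact hx)

lemma Big.sub {N : ℤ} {x y : K} (hx : w.Big N x) (hy : w.Big N y) : w.Big N (x - y) := by
  rw [sub_eq_add_neg]; exact hx.add w (hy.neg w)

lemma Big.sum {ι : Type*} {N : ℤ} (s : Finset ι) (f : ι → K)
    (h : ∀ i ∈ s, w.Big N (f i)) : w.Big N (∑ i ∈ s, f i) := by
  classical
  induction s using Finset.induction_on with
  | empty => exact Or.inl (by simp)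
  | insert _ _ hns ih =>
    rename_i a s'
    rw [Finset.sum_insert hns]
    exact (h a (by simp)).add w (ih fun i hi => h i (by simp [hi]))

lemma sum_ne {ι : Type*} (s : Finset ι) (f : ι → K) (hne : s.Nonempty)
    (h0 : ∀ i ∈ s, f i ≠ 0)
    (hd : ∀ i ∈ s, ∀ j ∈ s, i ≠ j → w.v (f i) ≠ w.v (f j)) :
    (∑ i ∈ s, f i) ≠ 0 ∧
      ∃ i ∈ s, w.v (∑ i ∈ s, f i) = w.v (f i) ∧ ∀ j ∈ s, w.v (f i) ≤ w.v (f j) := by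
  classical
  induction s using Finset.induction_on with
  | empty => simp at hne
  | insert _ _ hns ih =>
    rename_i a s'
    rw [Finset.sum_insert hns]
    by_cases hs' : s'.Nonempty
    · obtain ⟨hsum, i0, hi0, hveq, hmin⟩ := ih (hs')
        (fun i hi => h0 i (by simp [hi]))
        (fun i hi j hj hij => hd i (by simp [hi]) j (by simp [hj]) hij)
      have hfa : f a ≠ 0 := h0 a (by simp)
      have hne2 : w.v (f a) ≠ w.v (∑ i ∈ s', f i) := by
        rw [hveq]
        exact hd a (by simp) i0 (by simp [hi0]) (fun h => hns (h ▸ hi0))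
      obtain ⟨hz, hv⟩ := w.v_add_min hfa hsum hne2
      refine ⟨hz, ?_⟩
      rcases le_or_gt (w.v (f a)) (w.v (∑ i ∈ s', f i)) with hle | hlt
      · refine ⟨a, by simp, by omega, ?_⟩
        intro j hj
        rcases Finset.mem_insert.mp hj with rfl | hj
        · exact le_refl _
        · exact le_trans (by omega) (hmin j hj)
      · refine ⟨i0, by simp [hi0], by omega, ?_⟩
        intro j hj
        rcases Finset.mem_insert.mp hj with rfl | hj
        · omega
        · exact hmin j hj
    · rw [Finset.not_nonempty_iff_eq_empty.mp hs']
      simp only [Finset.sum_empty, add_zero]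
      exact ⟨h0 a (by simp), a, by simp, rfl, by
        intro j hj
        rcases Finset.mem_insert.mp hj with rfl | hj
        · exact le_refl _
        · simp [Finset.not_nonempty_iff_eq_empty.mp hs'] at hj⟩

end LocalFieldStruct
section TraceLemmas
open LocalFieldStruct

variable {K L : Type} [Field K] [Field L] [Algebra K L]

lemma alg_ne_zero {c : K} (hc : c ≠ 0) : algebraMap K L c ≠ 0 := by
  simpa using (map_ne_zero (algebraMap K L)).mpr hc

lemma trace_alg_mul (c : K) (x : L) :
    Algebra.trace K L (algebraMap K L c * x) = c * Algebra.trace K L x := by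
  rw [← Algebra.smul_def, map_smul, smul_eq_mul]

/-- Every element of `L` of valuation `d₀` has nonzero trace. -/
def TrNZ (K : Type) [Field K] {L : Type} [Field L] [Algebra K L]
    (wL : LocalFieldStruct L) (d₀ : ℤ) : Prop :=
  ∀ x : L, x ≠ 0 → wL.v x = d₀ → Algebra.trace K L x ≠ 0

variable (wK : LocalFieldStruct K) (wL : LocalFieldStruct L) {e : ℕ} {d : ℤ}

lemma v_alg (he : IsRamificationIndex wK wL e) {c : K} (hc : c ≠ 0) :
    wL.v (algebraMap K L c) = (e : ℤ) * wK.v c := he.2 c hc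

/-- Scaled version of `Tr(𝔭^{-d}) ⊆ O_K`. -/
lemma trace_val (he : IsRamificationIndex wK wL e) (hd : IsDifferentVal wK wL d)
    (x : L) (k : ℤ) (hx : -d + e * k ≤ wL.v x) :
    Algebra.trace K L x = 0 ∨ k ≤ wK.v (Algebra.trace K L x) := by
  by_cases hx0 : x = 0
  · exact Or.inl (by simp [hx0])
  obtain ⟨c, hc0, hck⟩ := wK.v_surj (-k)
  have hint : wK.Integral (Algebra.trace K L (algebraMap K L c * x)) := by
    refine (hd (-d)).mpr (le_refl _) _ ?_
    intro _
    rw [wL.v_mul _ _ (alg_ne_zero hc0) hx0, v_alg wK wL he hc0, hck, mul_neg]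
    omega
  rw [trace_alg_mul] at hint
  by_cases ht : Algebra.trace K L x = 0
  · exact Or.inl ht
  rcases hint with h | h
  · exact absurd (by simpa [hc0] using h) ht
  · rw [wK.v_mul _ _ hc0 ht, hck] at h
    exact Or.inr (by omega)

lemma exists_y (he : IsRamificationIndex wK wL e) (hd : IsDifferentVal wK wL d) :
    ∃ y : L, y ≠ 0 ∧ wL.v y = -d - 1 ∧ Algebra.trace K L y ≠ 0 ∧
      wK.v (Algebra.trace K L y) ≤ -1 := by
  have hnot : ¬ (∀ x : L, (x ≠ 0 → -d - 1 ≤ wL.v x) → wK.Integral (Algebra.trace K L x)) := by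
    intro h
    have := (hd (-d - 1)).mp h
    omega
  push_neg at hnot
  obtain ⟨y, hy1, hy2⟩ := hnot
  have hy0 : y ≠ 0 := by
    intro h
    exact hy2 (by simp [h, Integral])
  have htr : Algebra.trace K L y ≠ 0 ∧ wK.v (Algebra.trace K L y) ≤ -1 := by
    rw [Integral, not_or, not_le] at hy2
    exact ⟨hy2.1, by omega⟩
  refine ⟨y, hy0, ?_, htr.1, htr.2⟩
  have h1 : -d - 1 ≤ wL.v y := hy1 hy0
  rcases eq_or_lt_of_le h1 with h | h
  · omega
  · exfalso
    rcases trace_val wK wL he hd y 0 (by omega) with h | h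
    · exact htr.1 h
    · omega

/-- Shifting the critical valuation by multiples of `e`. -/
lemma TrNZ_shift (he : IsRamificationIndex wK wL e) {d₀ d₁ : ℤ}
    (h : TrNZ K wL d₀) (hdvd : (e : ℤ) ∣ d₀ - d₁) : TrNZ K wL d₁ := by
  intro x hx0 hxv
  obtain ⟨k, hk⟩ := hdvd
  obtain ⟨c, hc0, hck⟩ := wK.v_surj k
  have h1 : algebraMap K L c * x ≠ 0 := mul_ne_zero (alg_ne_zero hc0) hx0
  have h2 : wL.v (algebraMap K L c * x) = d₀ := by
    rw [wL.v_mul _ _ (alg_ne_zero hc0) hx0, v_alg wK wL he hc0, hck]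
    omega
  have := h _ h1 h2
  rw [trace_alg_mul] at this
  exact fun h0 => this (by simp [h0])

end TraceLemmas
section SComb
open LocalFieldStruct

variable {K L : Type} [Field K] [Field L] [Algebra K L]

/-- The `K`-linear combination `∑ cᵢ πⁱ`. -/
def Scomb {e : ℕ} (π : L) (c : Fin e → K) : L :=
  ∑ i : Fin e, algebraMap K L (c i) * π ^ (i : ℕ)

lemma Scomb_sub {e : ℕ} (π : L) (c c' : Fin e → K) :
    Scomb π (c - c') = Scomb π c - Scomb π c' := by
  simp only [Scomb, ← Finset.sum_sub_distrib, Pi.sub_apply, map_sub, sub_mul]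

lemma Scomb_add {e : ℕ} (π : L) (c c' : Fin e → K) :
    Scomb π (c + c') = Scomb π c + Scomb π c' := by
  simp only [Scomb, ← Finset.sum_add_distrib, Pi.add_apply, map_add, add_mul]

lemma Scomb_single {e : ℕ} (π : L) (i : Fin e) (a : K) :
    Scomb π (Pi.single i a) = algebraMap K L a * π ^ (i : ℕ) := by
  classical
  rw [Scomb, Finset.sum_eq_single i]
  · rw [Pi.single_eq_same]
  · intro j _ hj
    rw [Pi.single_eq_of_ne hj]
    simp
  · simp

variable (wK : LocalFieldStruct K) (wL : LocalFieldStruct L) {e : ℕ}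

lemma Sval (he : IsRamificationIndex wK wL e) {π : L} (hπ0 : π ≠ 0) (hπ1 : wL.v π = 1)
    (c : Fin e → K) (hc : ∃ i, c i ≠ 0) :
    Scomb π c ≠ 0 ∧
      ∀ j : Fin e, c j ≠ 0 → wL.v (Scomb π c) ≤ (e : ℤ) * wK.v (c j) + (j : ℕ) := by
  classical
  set f : Fin e → L := fun i => algebraMap K L (c i) * π ^ (i : ℕ) with hf
  have hfv : ∀ i : Fin e, c i ≠ 0 → f i ≠ 0 ∧ wL.v (f i) = (e : ℤ) * wK.v (c i) + (i : ℕ) := by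
    intro i hi
    have h1 : algebraMap K L (c i) ≠ 0 := alg_ne_zero hi
    have h2 : π ^ (i : ℕ) ≠ 0 := pow_ne_zero _ hπ0
    refine ⟨mul_ne_zero h1 h2, ?_⟩
    rw [hf, wL.v_mul _ _ h1 h2, v_alg wK wL he hi, wL.v_pow hπ0, hπ1, mul_one]
  set s : Finset (Fin e) := Finset.univ.filter (fun i => c i ≠ 0) with hs
  have hsum : Scomb π c = ∑ i ∈ s, f i := by
    rw [Scomb, ← hf]
    refine (Finset.sum_subset (Finset.filter_subset _ _) ?_).symm
    intro i _ hi
    simp only [hs, Finset.mem_filter, Finset.mem_univ, true_and, not_not] at hi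
    simp [hf, hi]
  have hsne : s.Nonempty := by
    obtain ⟨i, hi⟩ := hc
    exact ⟨i, by simp [hs, hi]⟩
  have hmem : ∀ i : Fin e, i ∈ s ↔ c i ≠ 0 := by
    intro i; simp [hs]
  have hdist : ∀ i ∈ s, ∀ j ∈ s, i ≠ j → wL.v (f i) ≠ wL.v (f j) := by
    intro i hi j hj hij
    rw [(hfv i ((hmem i).mp hi)).2, (hfv j ((hmem j).mp hj)).2]
    intro hEq
    have hdvd : (e : ℤ) ∣ ((i : ℕ) : ℤ) - ((j : ℕ) : ℤ) :=
      ⟨wK.v (c j) - wK.v (c i), by linear_combination hEq⟩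
    have hii : ((i : ℕ) : ℤ) < e := by exact_mod_cast i.2
    have hjj : ((j : ℕ) : ℤ) < e := by exact_mod_cast j.2
    have h0 : ((i : ℕ) : ℤ) - ((j : ℕ) : ℤ) = 0 := by
      refine Int.eq_zero_of_abs_lt_dvd hdvd ?_
      rw [abs_lt]
      constructor <;> omega
    exact hij (Fin.ext (by omega))
  obtain ⟨hne, i0, hi0, hveq, hmin⟩ :=
    wL.sum_ne s f hsne (fun i hi => (hfv i ((hmem i).mp hi)).1) hdist
  constructor
  · rw [hsum]; exact hne
  · intro j hj
    rw [hsum, hveq, ← (hfv j hj).2]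
    exact hmin j ((hmem j).mpr hj)

lemma e_le_finrank [FiniteDimensional K L] (he : IsRamificationIndex wK wL e)
    {π : L} (hπ0 : π ≠ 0) (hπ1 : wL.v π = 1) : e ≤ Module.finrank K L := by
  have hli : LinearIndependent K (fun i : Fin e => π ^ (i : ℕ)) := by
    rw [Fintype.linearIndependent_iff]
    intro g hg i
    by_contra hgi
    have hS : Scomb π g = 0 := by
      rw [Scomb, ← hg]
      exact Finset.sum_congr rfl fun j _ => by rw [Algebra.smul_def]
    exact (Sval wK wL he hπ0 hπ1 g ⟨i, hgi⟩).1 hS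
  simpa using hli.fintype_card_le_finrank

end SComb
section F1sec
open LocalFieldStruct

/-- the residue extension is trivial -/
def F1 (K : Type) [Field K] {L : Type} [Field L] [Algebra K L]
    (wL : LocalFieldStruct L) : Prop :=
  ∀ u : L, u ≠ 0 → wL.v u = 0 →
    ∃ c : K, u - algebraMap K L c = 0 ∨
      (u - algebraMap K L c ≠ 0 ∧ 1 ≤ wL.v (u - algebraMap K L c))

variable {K L : Type} [Field K] [Field L] [Algebra K L]
variable (wK : LocalFieldStruct K) (wL : LocalFieldStruct L) {e : ℕ} {d : ℤ}

lemma f1_of_e_eq [FiniteDimensional K L] (he : IsRamificationIndex wK wL e)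
    (hen : e = Module.finrank K L) : F1 K wL := by
  intro u hu0 huv
  by_contra hno
  push_neg at hno
  have Hu : ∀ c : K, u - algebraMap K L c ≠ 0 ∧ wL.v (u - algebraMap K L c) ≤ 0 := by
    intro c
    obtain ⟨h1, h2⟩ := hno c
    exact ⟨h1, by have := h2 h1; omega⟩
  have comb : ∀ a b : K, (a ≠ 0 ∨ b ≠ 0) →
      algebraMap K L a + algebraMap K L b * u ≠ 0 ∧
        ∃ k : ℤ, wL.v (algebraMap K L a + algebraMap K L b * u) = e * k := by
    intro a b hab
    by_cases hb : b = 0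
    · have ha : a ≠ 0 := by tauto
      refine ⟨by simpa [hb] using alg_ne_zero (L := L) ha, wK.v a, by
        simp [hb, v_alg wK wL he ha]⟩
    · set s : L := algebraMap K L (a * b⁻¹) + u with hs
      have hfac : algebraMap K L a + algebraMap K L b * u = algebraMap K L b * s := by
        have hbL : algebraMap K L b ≠ 0 := alg_ne_zero hb
        rw [hs, map_mul, map_inv₀, mul_add, ← mul_assoc,
          mul_comm (algebraMap K L b) (algebraMap K L a), mul_assoc,
          mul_inv_cancel₀ hbL, mul_one]
      have hss : s ≠ 0 ∧ ∃ k : ℤ, wL.v s = e * k := by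
        by_cases hab0 : a * b⁻¹ = 0
        · exact ⟨by simp [hs, hab0, hu0], 0, by simp [hs, hab0, huv]⟩
        rcases lt_trichotomy (wK.v (a * b⁻¹)) 0 with hlt | heq | hgt
        · have h1 : wL.v (algebraMap K L (a * b⁻¹)) < wL.v u := by
            rw [v_alg wK wL he hab0, huv]
            exact mul_neg_of_pos_of_neg (by exact_mod_cast he.1) hlt
          obtain ⟨h2, h3⟩ := wL.v_add_left (alg_ne_zero hab0) hu0 h1
          exact ⟨h2, wK.v (a * b⁻¹), by rw [h3, v_alg wK wL he hab0]⟩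
        · have hrw : s = u - algebraMap K L (-(a * b⁻¹)) := by
            rw [hs, map_neg]; ring
          obtain ⟨h1, h2⟩ := Hu (-(a * b⁻¹))
          rw [← hrw] at h1 h2
          have h3 : 0 ≤ wL.v s := by
            have := wL.v_add _ _ (alg_ne_zero hab0) hu0 (hs ▸ h1)
            rw [← hs, v_alg wK wL he hab0, heq, huv] at this
            simpa using this
          exact ⟨h1, 0, by omega⟩
        · have h1 : wL.v u < wL.v (algebraMap K L (a * b⁻¹)) := by
            rw [v_alg wK wL he hab0, huv]
            exact mul_pos (by exact_mod_cast he.1) hgt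
          obtain ⟨h2, h3⟩ := wL.v_add_left hu0 (alg_ne_zero hab0) h1
          rw [add_comm] at h2 h3
          exact ⟨hs ▸ h2, 0, by rw [hs, h3, huv]; ring⟩
      obtain ⟨hs0, k, hk⟩ := hss
      refine ⟨by rw [hfac]; exact mul_ne_zero (alg_ne_zero hb) hs0, wK.v b + k, ?_⟩
      rw [hfac, wL.v_mul _ _ (alg_ne_zero hb) hs0, v_alg wK wL he hb, hk]
      ring
  obtain ⟨π, hπ0, hπ1⟩ := wL.v_surj 1
  have hli : LinearIndependent K
      (Sum.elim (fun i : Fin e => π ^ (i : ℕ)) (fun i : Fin e => u * π ^ (i : ℕ))) := by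
    rw [Fintype.linearIndependent_iff]
    intro t ht p
    by_contra htp
    classical
    set F : Fin e → L := fun i =>
      (algebraMap K L (t (Sum.inl i)) + algebraMap K L (t (Sum.inr i)) * u) * π ^ (i : ℕ)
      with hF
    have hsum : ∑ i : Fin e, F i = 0 := by
      rw [← ht, Fintype.sum_sum_type]
      rw [← Finset.sum_add_distrib]
      refine Finset.sum_congr rfl fun i _ => ?_
      rw [hF]
      simp only [Sum.elim_inl, Sum.elim_inr, Algebra.smul_def]
      ring
    set s : Finset (Fin e) :=
      Finset.univ.filter (fun i => t (Sum.inl i) ≠ 0 ∨ t (Sum.inr i) ≠ 0) with hsdef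
    have hmem : ∀ i : Fin e, i ∈ s ↔ (t (Sum.inl i) ≠ 0 ∨ t (Sum.inr i) ≠ 0) := by
      intro i; simp [hsdef]
    have hsum2 : ∑ i ∈ s, F i = 0 := by
      rw [← hsum]
      refine Finset.sum_subset (Finset.filter_subset _ _) ?_
      intro i _ hi
      rw [hmem] at hi
      push_neg at hi
      simp [hF, hi.1, hi.2]
    have hsne : s.Nonempty := by
      rcases p with i | i
      · exact ⟨i, (hmem i).mpr (Or.inl htp)⟩
      · exact ⟨i, (hmem i).mpr (Or.inr htp)⟩
    have hprops : ∀ i ∈ s, F i ≠ 0 ∧ ∃ k : ℤ, wL.v (F i) = e * k + (i : ℕ) := by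
      intro i hi
      obtain ⟨h1, k, h2⟩ := comb _ _ ((hmem i).mp hi)
      refine ⟨mul_ne_zero h1 (pow_ne_zero _ hπ0), k, ?_⟩
      rw [hF]
      rw [wL.v_mul _ _ h1 (pow_ne_zero _ hπ0), h2, wL.v_pow hπ0, hπ1, mul_one]
    have hdist : ∀ i ∈ s, ∀ j ∈ s, i ≠ j → wL.v (F i) ≠ wL.v (F j) := by
      intro i hi j hj hij
      obtain ⟨_, ki, hki⟩ := hprops i hi
      obtain ⟨_, kj, hkj⟩ := hprops j hj
      rw [hki, hkj]
      intro hEq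
      have hdvd : (e : ℤ) ∣ ((i : ℕ) : ℤ) - ((j : ℕ) : ℤ) :=
        ⟨kj - ki, by linear_combination hEq⟩
      have hii : ((i : ℕ) : ℤ) < e := by exact_mod_cast i.2
      have hjj : ((j : ℕ) : ℤ) < e := by exact_mod_cast j.2
      have h0 : ((i : ℕ) : ℤ) - ((j : ℕ) : ℤ) = 0 := by
        refine Int.eq_zero_of_abs_lt_dvd hdvd ?_
        rw [abs_lt]
        constructor <;> omega
      exact hij (Fin.ext (by omega))
    obtain ⟨hne, _⟩ := wL.sum_ne s F hsne (fun i hi => (hprops i hi).1) hdist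
    exact hne hsum2
  have hcard := hli.fintype_card_le_finrank
  simp only [Fintype.card_sum, Fintype.card_fin] at hcard
  rw [← hen] at hcard
  have := he.1
  omega

lemma f1_of_TrNZ (he : IsRamificationIndex wK wL e) (hd : IsDifferentVal wK wL d)
    (hP : TrNZ K wL (-d - 1)) : F1 K wL := by
  intro u hu0 huv
  obtain ⟨y, hy0, hyv, hty0, htyv⟩ := exists_y wK wL he hd
  have huy0 : u * y ≠ 0 := mul_ne_zero hu0 hy0
  have huyv : wL.v (u * y) = -d - 1 := by
    rw [wL.v_mul _ _ hu0 hy0, huv, hyv]; ring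
  have htuy : Algebra.trace K L (u * y) ≠ 0 := hP _ huy0 huyv
  have htuyv : -1 ≤ wK.v (Algebra.trace K L (u * y)) := by
    rcases trace_val wK wL he hd (u * y) (-1) (by rw [huyv]; have := he.1; nlinarith) with h | h
    · exact absurd h htuy
    · exact h
  set c : K := Algebra.trace K L (u * y) * (Algebra.trace K L y)⁻¹ with hc
  have hc0 : c ≠ 0 := mul_ne_zero htuy (inv_ne_zero hty0)
  have hvc : 0 ≤ wK.v c := by
    rw [hc, wK.v_mul _ _ htuy (inv_ne_zero hty0), wK.v_inv hty0]
    omega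
  have htrx : Algebra.trace K L ((u - algebraMap K L c) * y) = 0 := by
    rw [sub_mul, map_sub, trace_alg_mul, hc]
    field_simp
    ring
  by_cases hzero : u - algebraMap K L c = 0
  · exact ⟨c, Or.inl hzero⟩
  refine ⟨c, Or.inr ⟨hzero, ?_⟩⟩
  have hx0 : (u - algebraMap K L c) * y ≠ 0 := mul_ne_zero hzero hy0
  have hvge : 0 ≤ wL.v (u - algebraMap K L c) := by
    have h1 := wL.v_add u (-(algebraMap K L c)) hu0
      (neg_ne_zero.mpr (alg_ne_zero hc0)) (by rw [← sub_eq_add_neg]; exact hzero)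
    rw [wL.v_neg (alg_ne_zero hc0), v_alg wK wL he hc0, huv, ← sub_eq_add_neg] at h1
    have h2 : (0 : ℤ) ≤ (e : ℤ) * wK.v c := by positivity
    omega
  have hne : wL.v ((u - algebraMap K L c) * y) ≠ -d - 1 := by
    intro h
    exact hP _ hx0 h htrx
  rw [wL.v_mul _ _ hzero hy0, hyv] at hne
  omega

lemma dvd_of_TrNZ (he : IsRamificationIndex wK wL e) (hd : IsDifferentVal wK wL d)
    {d₀ : ℤ} (hP : TrNZ K wL d₀) : (e : ℤ) ∣ d₀ + d + 1 := by
  by_contra hdvd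
  have he1 : 0 < e := he.1
  obtain ⟨x₀, hx₀0, hx₀v⟩ := wL.v_surj d₀
  have ht0 : Algebra.trace K L x₀ ≠ 0 := hP x₀ hx₀0 hx₀v
  set q : ℤ := (d₀ + d) / e with hq
  set r : ℤ := (d₀ + d) % e with hr
  have hqr : d₀ + d = e * q + r := (Int.mul_ediv_add_emod _ _).symm
  have hr0 : 0 ≤ r := Int.emod_nonneg _ (by exact_mod_cast he1.ne')
  have hre : r < e := Int.emod_lt_of_pos _ (by exact_mod_cast he1)
  have hrlt : r ≤ e - 2 := by
    rcases eq_or_lt_of_le (by omega : r ≤ e - 1) with h | h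
    · exfalso
      refine hdvd ⟨q + 1, ?_⟩
      have h4 : (e : ℤ) * (q + 1) = (e : ℤ) * q + e := by ring
      omega
    · omega
  have hm : q ≤ wK.v (Algebra.trace K L x₀) := by
    rcases trace_val wK wL he hd x₀ q (by omega) with h | h
    · exact absurd h ht0
    · exact h
  obtain ⟨y, hy0, hyv, hty0, htyv⟩ := exists_y wK wL he hd
  set c : K := Algebra.trace K L x₀ * (Algebra.trace K L y)⁻¹ with hc
  have hc0 : c ≠ 0 := mul_ne_zero ht0 (inv_ne_zero hty0)
  have hvc : wK.v c = wK.v (Algebra.trace K L x₀) - wK.v (Algebra.trace K L y) := by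
    rw [hc, wK.v_mul _ _ ht0 (inv_ne_zero hty0), wK.v_inv hty0]
    ring
  set z : L := algebraMap K L c * y with hz
  have hz0 : z ≠ 0 := mul_ne_zero (alg_ne_zero hc0) hy0
  have htz : Algebra.trace K L z = Algebra.trace K L x₀ := by
    rw [hz, trace_alg_mul, hc]
    field_simp
  have hvz : wL.v z = (e : ℤ) * wK.v c - d - 1 := by
    rw [hz, wL.v_mul _ _ (alg_ne_zero hc0) hy0, v_alg wK wL he hc0, hyv]
    ring
  have hgt : d₀ < wL.v z := by
    rw [hvz, hvc]
    have h1 : q + 1 ≤ wK.v (Algebra.trace K L x₀) - wK.v (Algebra.trace K L y) := by omega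
    have h2 : (e : ℤ) * (q + 1) ≤
        (e : ℤ) * (wK.v (Algebra.trace K L x₀) - wK.v (Algebra.trace K L y)) :=
      mul_le_mul_of_nonneg_left h1 (by positivity)
    have h3 : (e : ℤ) * (q + 1) = e * q + e := by ring
    omega
  obtain ⟨hxz0, hxzv⟩ := wL.v_add_left hx₀0 (neg_ne_zero.mpr hz0)
    (by rw [wL.v_neg hz0]; omega)
  rw [← sub_eq_add_neg] at hxz0 hxzv
  have : Algebra.trace K L (x₀ - z) = 0 := by rw [map_sub, htz]; ring
  exact hP _ hxz0 (by omega) this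

lemma TrNZ_of_e_eq [FiniteDimensional K L] (he : IsRamificationIndex wK wL e)
    (hd : IsDifferentVal wK wL d) (hen : e = Module.finrank K L) {d₀ : ℤ}
    (hdvd : ((Module.finrank K L : ℕ) : ℤ) ∣ d₀ + d + 1) : TrNZ K wL d₀ := by
  have hf1 := f1_of_e_eq wK wL he hen
  have base : TrNZ K wL (-d - 1) := by
    intro x hx0 hxv htr0
    obtain ⟨y, hy0, hyv, hty0, htyv⟩ := exists_y wK wL he hd
    set u : L := x * y⁻¹ with hu
    have hu0 : u ≠ 0 := mul_ne_zero hx0 (inv_ne_zero hy0)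
    have huv : wL.v u = 0 := by
      rw [hu, wL.v_mul _ _ hx0 (inv_ne_zero hy0), wL.v_inv hy0, hxv, hyv]
      ring
    have hxuy : x = u * y := by rw [hu]; field_simp
    obtain ⟨c, hc⟩ := hf1 u hu0 huv
    rcases hc with hc | ⟨hc0, hc1⟩
    · have hcu : u = algebraMap K L c := by linear_combination hc
      have hcne : c ≠ 0 := by
        intro h
        rw [h, map_zero] at hcu
        exact hu0 hcu
      have : Algebra.trace K L x = c * Algebra.trace K L y := by
        rw [hxuy, hcu, trace_alg_mul]
      exact (mul_ne_zero hcne hty0) (by rw [← this]; exact htr0)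
    · set g : L := u - algebraMap K L c with hg
      have hcne : c ≠ 0 := by
        intro hcc
        rw [hg, hcc, map_zero, sub_zero] at hc1
        omega
      have hvc : wK.v c = 0 := by
        have hne : wL.v u ≠ wL.v (-g) := by rw [wL.v_neg hc0, huv]; omega
        have hadd := wL.v_add_min hu0 (neg_ne_zero.mpr hc0) hne
        have heq : u + -g = algebraMap K L c := by rw [hg]; ring
        rw [heq] at hadd
        have h2 := hadd.2
        rw [wL.v_neg hc0, huv, v_alg wK wL he hcne] at h2
        have he1 : 0 < e := he.1
        have h3 : min 0 (wL.v g) = 0 := by omega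
        rw [h3] at h2
        exact (mul_eq_zero.mp h2).resolve_left (by exact_mod_cast he1.ne')
      have hxdecomp : x = algebraMap K L c * y + g * y := by
        rw [hxuy, hg]; ring
      have htr : c * Algebra.trace K L y = -(Algebra.trace K L (g * y)) := by
        have hmap := congrArg (Algebra.trace K L) hxdecomp
        rw [map_add, trace_alg_mul, htr0] at hmap
        linear_combination -hmap
      have hcty0 : c * Algebra.trace K L y ≠ 0 := mul_ne_zero hcne hty0
      have hhy : Algebra.trace K L (g * y) ≠ 0 := by
        intro h0; rw [h0, neg_zero] at htr; exact hcty0 htr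
      have hge : 0 ≤ wK.v (Algebra.trace K L (g * y)) := by
        have harg : -d + (e : ℤ) * 0 ≤ wL.v (g * y) := by
          rw [wL.v_mul _ _ hc0 hy0, hyv, mul_zero]
          omega
        rcases trace_val wK wL he hd (g * y) 0 harg with h | h
        · exact absurd h hhy
        · exact h
      have hv1 : wK.v (c * Algebra.trace K L y) ≤ -1 := by
        rw [wK.v_mul _ _ hcne hty0, hvc]; omega
      rw [htr, wK.v_neg hhy] at hv1
      omega
  refine TrNZ_shift wK wL he base ?_
  rw [← hen] at hdvd
  rw [show (-d - 1) - d₀ = -(d₀ + d + 1) by ring]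
  exact dvd_neg.mpr hdvd

end F1sec
section Analytic
open LocalFieldStruct

variable {K L : Type} [Field K] [Field L] [Algebra K L] [FiniteDimensional K L]
variable (wK : LocalFieldStruct K) (wL : LocalFieldStruct L) {e : ℕ}

lemma finrank_le_e (he : IsRamificationIndex wK wL e) (hf1 : F1 K wL) :
    Module.finrank K L ≤ e := by
  classical
  obtain ⟨π, hπ0, hπ1⟩ := wL.v_surj 1
  have he1 : 0 < e := he.1
  have digit : ∀ ρ : L, ρ ≠ 0 → ∃ (a : K) (i : Fin e),
      (ρ - algebraMap K L a * π ^ (i : ℕ) = 0 ∨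
        (ρ - algebraMap K L a * π ^ (i : ℕ) ≠ 0 ∧
          wL.v ρ + 1 ≤ wL.v (ρ - algebraMap K L a * π ^ (i : ℕ)))) := by
    intro ρ hρ
    set rv : ℤ := wL.v ρ with hrv
    set q : ℤ := rv / e with hqdef
    set iz : ℤ := rv % e with hizdef
    have hiz0 : 0 ≤ iz := Int.emod_nonneg _ (by exact_mod_cast he1.ne')
    have hize : iz < e := Int.emod_lt_of_pos _ (by exact_mod_cast he1)
    have hqr : rv = e * q + iz := (Int.mul_ediv_add_emod _ _).symm
    set i : Fin e := ⟨iz.toNat, by omega⟩ with hidef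
    have hic : ((i : ℕ) : ℤ) = iz := by
      rw [hidef]
      simp [Int.toNat_of_nonneg hiz0]
    obtain ⟨b, hb0, hbq⟩ := wK.v_surj q
    set β : L := algebraMap K L b * π ^ (i : ℕ) with hβ
    have hβ0 : β ≠ 0 := mul_ne_zero (alg_ne_zero hb0) (pow_ne_zero _ hπ0)
    have hβv : wL.v β = rv := by
      rw [hβ, wL.v_mul _ _ (alg_ne_zero hb0) (pow_ne_zero _ hπ0), v_alg wK wL he hb0,
        hbq, wL.v_pow hπ0, hπ1, mul_one, hic]
      omega
    set u : L := ρ * β⁻¹ with hu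
    have hu0 : u ≠ 0 := mul_ne_zero hρ (inv_ne_zero hβ0)
    have huv : wL.v u = 0 := by
      rw [hu, wL.v_mul _ _ hρ (inv_ne_zero hβ0), wL.v_inv hβ0, hβv]
      omega
    obtain ⟨c, hc⟩ := hf1 u hu0 huv
    have hρβ : ρ = u * β := by rw [hu]; field_simp
    have hkey : ρ - algebraMap K L (c * b) * π ^ (i : ℕ)
        = (u - algebraMap K L c) * β := by
      rw [hρβ, hβ, map_mul]; ring
    rcases hc with hc | ⟨hc1, hc2⟩
    · exact ⟨c * b, i, Or.inl (by rw [hkey, hc, zero_mul])⟩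
    · refine ⟨c * b, i, Or.inr ⟨?_, ?_⟩⟩
      · rw [hkey]; exact mul_ne_zero hc1 hβ0
      · rw [hkey, wL.v_mul _ _ hc1 hβ0, hβv]
        omega
  have P1 : ∀ (x : L), x ≠ 0 → ∀ m : ℕ, ∃ c : Fin e → K,
      x - Scomb π c = 0 ∨ (x - Scomb π c ≠ 0 ∧ wL.v x + m ≤ wL.v (x - Scomb π c)) := by
    intro x hx m
    induction m with
    | zero =>
      refine ⟨0, ?_⟩
      have hS0 : Scomb π (0 : Fin e → K) = 0 := by simp [Scomb]
      rw [hS0, sub_zero]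
      exact Or.inr ⟨hx, by simp⟩
    | succ m ih =>
      obtain ⟨c, hc⟩ := ih
      rcases hc with hc | ⟨hc1, hc2⟩
      · exact ⟨c, Or.inl hc⟩
      · obtain ⟨a, i, hstep⟩ := digit _ hc1
        refine ⟨c + Pi.single i a, ?_⟩
        have hrw : x - Scomb π (c + Pi.single i a)
            = (x - Scomb π c) - algebraMap K L a * π ^ (i : ℕ) := by
          rw [Scomb_add, Scomb_single]; ring
        rw [hrw]
        rcases hstep with h | ⟨h1, h2⟩
        · exact Or.inl h
        · refine Or.inr ⟨h1, ?_⟩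
          push_cast
          omega
  have coefb : ∀ (c : Fin e → K) (N : ℤ), wL.Big N (Scomb π c) →
      ∀ j : Fin e, c j = 0 ∨ N ≤ (e : ℤ) * wK.v (c j) + (j : ℕ) := by
    intro c N hbig j
    by_cases hcc : c j = 0
    · exact Or.inl hcc
    right
    have hSv := Sval wK wL he hπ0 hπ1 c ⟨j, hcc⟩
    rcases hbig with h | h
    · exact absurd h hSv.1
    · exact le_trans h (hSv.2 j hcc)
  have main : ∀ x : L, ∃ c : Fin e → K, x = Scomb π c := by
    intro x
    by_cases hx : x = 0
    · exact ⟨0, by simp [hx, Scomb]⟩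
    choose cs hcs using P1 x hx
    have hrem : ∀ m : ℕ, wL.Big (wL.v x + m) (x - Scomb π (cs m)) := by
      intro m
      rcases hcs m with h | ⟨_, h2⟩
      · exact Or.inl h
      · exact Or.inr h2
    have hcauchy : ∀ i : Fin e, ∀ N : ℤ, ∃ M : ℕ, ∀ m : ℕ, M ≤ m → ∀ n : ℕ, M ≤ n →
        cs m i = cs n i ∨ N ≤ wK.v (cs m i - cs n i) := by
      intro i N
      refine ⟨((e : ℤ) * N + e - wL.v x).toNat, ?_⟩
      intro m hm n hn
      set M0 : ℕ := ((e : ℤ) * N + e - wL.v x).toNat with hM0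
      have hbig : wL.Big (wL.v x + M0) (Scomb π (cs m) - Scomb π (cs n)) := by
        have h1 := (hrem m).mono wL (show wL.v x + (M0 : ℤ) ≤ wL.v x + m by
          have : (M0 : ℤ) ≤ m := by exact_mod_cast hm
          omega)
        have h2 := (hrem n).mono wL (show wL.v x + (M0 : ℤ) ≤ wL.v x + n by
          have : (M0 : ℤ) ≤ n := by exact_mod_cast hn
          omega)
        have hdiff : Scomb π (cs m) - Scomb π (cs n)
            = (x - Scomb π (cs n)) - (x - Scomb π (cs m)) := by ring
        rw [hdiff]
        exact h2.sub wL h1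
      rw [← Scomb_sub] at hbig
      have hco := coefb (cs m - cs n) _ hbig i
      rcases hco with h | h
      · left
        have h0 : cs m i - cs n i = 0 := h
        exact sub_eq_zero.mp h0
      · right
        rw [Pi.sub_apply] at h
        have htn : (e : ℤ) * N + e - wL.v x ≤ (M0 : ℤ) := Int.self_le_toNat _
        have hie : ((i : ℕ) : ℤ) < e := by exact_mod_cast i.2
        have hie0 : (0 : ℤ) ≤ ((i : ℕ) : ℤ) := by positivity
        have hlt : (e : ℤ) * N < (e : ℤ) * wK.v (cs m i - cs n i) := by omega
        exact le_of_lt ((mul_lt_mul_iff_right₀ (show (0 : ℤ) < e by exact_mod_cast he1)).mp hlt)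
    have hlim : ∀ i : Fin e, ∃ γ : K, ∀ N : ℤ, ∃ M : ℕ, ∀ n : ℕ, M ≤ n →
        cs n i = γ ∨ N ≤ wK.v (cs n i - γ) := by
      intro i
      exact wK.complete (fun n => cs n i) (hcauchy i)
    choose γ hγ using hlim
    refine ⟨γ, ?_⟩
    by_contra hne
    have hρ0 : x - Scomb π γ ≠ 0 := sub_ne_zero.mpr hne
    set V : ℤ := wL.v (x - Scomb π γ) with hV
    set T : ℤ := |V| + 1 with hT
    have hT0 : 0 < T := by positivity
    have hTV : V < T := by
      have := le_abs_self V
      omega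
    choose Mi hMi using fun i : Fin e => hγ i T
    set n : ℕ := max (T - wL.v x).toNat (Finset.univ.sup Mi) with hn
    have hbig1 : wL.Big T (x - Scomb π (cs n)) := by
      refine (hrem n).mono wL ?_
      have h1 : (T - wL.v x) ≤ ((T - wL.v x).toNat : ℤ) := Int.self_le_toNat _
      have h2 : ((T - wL.v x).toNat : ℤ) ≤ (n : ℤ) := by
        exact_mod_cast le_max_left (T - wL.v x).toNat (Finset.univ.sup Mi)
      omega
    have hbig2 : wL.Big T (Scomb π (cs n) - Scomb π γ) := by
      rw [← Scomb_sub, Scomb]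
      refine Big.sum wL _ _ ?_
      intro i _
      by_cases hz : (cs n - γ) i = 0
      · exact Or.inl (by rw [hz, map_zero, zero_mul])
      · right
        have hni : Mi i ≤ n := le_trans (Finset.le_sup (Finset.mem_univ i))
          (le_max_right _ _)
        have hTK : T ≤ wK.v ((cs n - γ) i) := by
          rcases hMi i n hni with h | h
          · exact absurd (by rw [Pi.sub_apply, h, sub_self]) hz
          · rw [Pi.sub_apply]; exact h
        have hterm : wL.v (algebraMap K L ((cs n - γ) i) * π ^ (i : ℕ))
            = (e : ℤ) * wK.v ((cs n - γ) i) + (i : ℕ) := by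
          rw [wL.v_mul _ _ (alg_ne_zero hz) (pow_ne_zero _ hπ0), v_alg wK wL he hz,
            wL.v_pow hπ0, hπ1, mul_one]
        rw [hterm]
        have h1 : (e : ℤ) * T ≤ (e : ℤ) * wK.v ((cs n - γ) i) :=
          mul_le_mul_of_nonneg_left hTK (by positivity)
        have h2 : T ≤ (e : ℤ) * T := le_mul_of_one_le_left hT0.le (by exact_mod_cast he1)
        have hie0 : (0 : ℤ) ≤ ((i : ℕ) : ℤ) := by positivity
        omega
    have hbigV : wL.Big T (x - Scomb π γ) := by
      have hdiff : x - Scomb π γ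
          = (x - Scomb π (cs n)) + (Scomb π (cs n) - Scomb π γ) := by ring
      rw [hdiff]
      exact hbig1.add wL hbig2
    rcases hbigV with h | h
    · exact hρ0 h
    · rw [← hV] at h
      omega
  have hspan : Submodule.span K (Set.range fun i : Fin e => π ^ (i : ℕ)) = ⊤ := by
    rw [Submodule.eq_top_iff']
    intro x
    obtain ⟨c, hc⟩ := main x
    rw [hc, Scomb]
    refine Submodule.sum_mem _ ?_
    intro i _
    rw [← Algebra.smul_def]
    exact Submodule.smul_mem _ _ (Submodule.subset_span ⟨i, rfl⟩)
  simpa using finrank_le_of_span_eq_top hspan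

end Analytic

/-- `x` is a normal basis generator of `L` over `K`: the Galois conjugates of
`x` form a `K`-basis of `L`. -/
def IsNormalElement (K : Type) [Field K] {L : Type} [Field L] [Algebra K L]
    (x : L) : Prop :=
  LinearIndependent K (fun σ : L ≃ₐ[K] L => σ x) ∧
    Submodule.span K (Set.range fun σ : L ≃ₐ[K] L => σ x) = ⊤

/-- The valuation criterion `VC(L/K)`, for an extension with ramification
index `e` and different of valuation `d`: every nonzero `x ∈ L` with
`v_L(x) ≡ -d-1 (mod e)` is a normal basis generator of `L` over `K`. -/
def VC (K : Type) [Field K] {L : Type} [Field L] [Algebra K L]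
    (wL : LocalFieldStruct L) (e : ℕ) (d : ℤ) : Prop :=
  ∀ x : L, x ≠ 0 → Int.ModEq (e : ℤ) (wL.v x) (-d - 1) → IsNormalElement K x

open LocalFieldStruct in
/-- **Proposition 1.** Let `L/K` be a finite separable extension of local fields
and let `d₀` be an integer.  Every element of `L` of valuation `d₀` has non-zero
trace over `K` if and only if (1) `L/K` is totally ramified, and
(2) `d₀ ≡ -d_{L/K} - 1 (mod [L:K])`. -/
theorem statement0 {K L : Type} [Field K] [Field L] [Algebra K L]
    [FiniteDimensional K L] [Algebra.IsSeparable K L]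
    (wK : LocalFieldStruct K) (wL : LocalFieldStruct L)
    (e : ℕ) (he : IsRamificationIndex wK wL e)
    (d : ℤ) (hd : IsDifferentVal wK wL d)
    (d₀ : ℤ) :
    (∀ x : L, x ≠ 0 → wL.v x = d₀ → Algebra.trace K L x ≠ 0) ↔
      (e = Module.finrank K L ∧
        Int.ModEq (Module.finrank K L : ℤ) d₀ (-d - 1)) := by
  constructor
  · intro hP
    have hP' : TrNZ K wL d₀ := hP
    have hdvd : (e : ℤ) ∣ d₀ + d + 1 := dvd_of_TrNZ wK wL he hd hP'
    have hPb : TrNZ K wL (-d - 1) :=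
      TrNZ_shift wK wL he hP' (by rw [show d₀ - (-d - 1) = d₀ + d + 1 by ring]; exact hdvd)
    have hf1 : F1 K wL := f1_of_TrNZ wK wL he hd hPb
    obtain ⟨π, hπ0, hπ1⟩ := wL.v_surj 1
    have h1 : e ≤ Module.finrank K L := e_le_finrank wK wL he hπ0 hπ1
    have h2 : Module.finrank K L ≤ e := finrank_le_e wK wL he hf1
    have hen : e = Module.finrank K L := le_antisymm h1 h2
    refine ⟨hen, ?_⟩
    rw [Int.modEq_iff_dvd, ← hen, show (-d - 1) - d₀ = -(d₀ + d + 1) by ring]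
    exact dvd_neg.mpr hdvd
  · rintro ⟨hen, hmod⟩
    have hdvd : ((Module.finrank K L : ℕ) : ℤ) ∣ d₀ + d + 1 := by
      have h := Int.ModEq.dvd hmod
      rw [show (-d - 1) - d₀ = -(d₀ + d + 1) by ring] at h
      exact dvd_neg.mp h
    exact TrNZ_of_e_eq wK wL he hd hen hdvd
end

section
/- Let L/K be a finite separable extension of local fields. For every integer i, the image of the fractional ideal 𝔭_L^{−d_{L/K}+i} under the trace map Tr_{L/K} equals 𝔭_K^{⌊i/e_{L/K}⌋}, where ⌊x⌋ denotes the largest integer n with n ≤ x. -/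
namespace LocalFieldStruct

lemma v_one'' {K : Type} [Field K] (w : LocalFieldStruct K) : w.v 1 = 0 := by
  have h := w.v_mul 1 1 one_ne_zero one_ne_zero
  rw [mul_one] at h; linarith

lemma aux_tr' {K L : Type} [Field K] [Field L] [Algebra K L] (a : K) (z : L) :
    Algebra.trace K L (algebraMap K L a * z) = a * Algebra.trace K L z := by
  rw [← Algebra.smul_def, map_smul, smul_eq_mul]

end LocalFieldStruct

open LocalFieldStruct in
/-- For a finite separable extension `L/K` of local fields and every `i : ℤ`,
`Tr_{L/K}(𝔭_L^{-d_{L/K}+i}) = 𝔭_K^{⌊i/e_{L/K}⌋}`. -/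
theorem statement1 {K L : Type} [Field K] [Field L] [Algebra K L]
    [FiniteDimensional K L] [Algebra.IsSeparable K L]
    (wK : LocalFieldStruct K) (wL : LocalFieldStruct L)
    (e : ℕ) (he : IsRamificationIndex wK wL e)
    (d : ℤ) (hd : IsDifferentVal wK wL d)
    (i : ℤ) :
    (fun x : L => Algebra.trace K L x) '' {x : L | x ≠ 0 → -d + i ≤ wL.v x} =
      {y : K | y ≠ 0 → Int.fdiv i (e : ℤ) ≤ wK.v y} := by
  obtain ⟨he1, hev⟩ := he
  have he0 : (0:ℤ) < (e:ℤ) := by exact_mod_cast he1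
  set m : ℤ := Int.fdiv i (e:ℤ) with hm
  have hmq : m = i / (e:ℤ) := Int.fdiv_eq_ediv_of_nonneg i he0.le
  have hdm := Int.mul_ediv_add_emod i (e:ℤ)
  have hm1 : (e:ℤ) * m ≤ i := by
    have := Int.emod_nonneg i he0.ne'
    rw [hmq]; linarith
  have hm2 : i < (e:ℤ) * m + e := by
    have := Int.emod_lt_of_pos i he0
    rw [hmq]; linarith
  have hfwd : ∀ z : L, (z ≠ 0 → -d ≤ wL.v z) → wK.Integral (Algebra.trace K L z) :=
    (hd (-d)).mpr le_rfl
  have hx0 : ∃ x₀ : L, (x₀ ≠ 0 → -d - 1 ≤ wL.v x₀) ∧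
      ¬ wK.Integral (Algebra.trace K L x₀) := by
    by_contra h
    push_neg at h
    have h2 : -d ≤ -d - 1 := (hd (-d - 1)).mp (fun x hx => h x hx)
    linarith
  obtain ⟨x₀, hx₀v, hx₀t⟩ := hx0
  rw [LocalFieldStruct.Integral] at hx₀t
  push_neg at hx₀t
  obtain ⟨ht0, htneg⟩ := hx₀t
  have hx₀0 : x₀ ≠ 0 := by
    intro h; apply ht0; rw [h, map_zero]
  have hx₀v' : -d - 1 ≤ wL.v x₀ := hx₀v hx₀0
  obtain ⟨c, hc0, hcv⟩ := wK.v_surj (m + 1)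
  have hac : algebraMap K L c ≠ 0 := by
    simpa using hc0
  set z₀ : L := algebraMap K L c * x₀ with hz₀def
  have hz₀0 : z₀ ≠ 0 := mul_ne_zero hac hx₀0
  have hz₀v : wL.v z₀ = (e:ℤ) * (m + 1) + wL.v x₀ := by
    rw [hz₀def, wL.v_mul _ _ hac hx₀0, hev c hc0, hcv]
  have hz₀mem : -d + i ≤ wL.v z₀ := by
    rw [hz₀v]; nlinarith
  set t : K := Algebra.trace K L z₀ with htdef
  have htval : t = c * Algebra.trace K L x₀ := aux_tr' c x₀
  have ht0' : t ≠ 0 := by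
    rw [htval]; exact mul_ne_zero hc0 ht0
  have htv : wK.v t ≤ m := by
    rw [htval, wK.v_mul _ _ hc0 ht0, hcv]; linarith
  ext y
  constructor
  · rintro ⟨x, hxS, rfl⟩
    intro hy0
    simp only at hy0 ⊢
    have hx0' : x ≠ 0 := by
      intro h; apply hy0; simp [h]
    have hxv : -d + i ≤ wL.v x := hxS hx0'
    obtain ⟨c', hc'0, hc'v⟩ := wK.v_surj (-m)
    have hac' : algebraMap K L c' ≠ 0 := by simpa using hc'0
    have hz0 : algebraMap K L c' * x ≠ 0 := mul_ne_zero hac' hx0'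
    have hzv : -d ≤ wL.v (algebraMap K L c' * x) := by
      rw [wL.v_mul _ _ hac' hx0', hev c' hc'0, hc'v]; nlinarith
    have hint := hfwd _ (fun _ => hzv)
    rw [aux_tr'] at hint
    rcases hint with h | h
    · exact absurd (by simpa [hc'0] using h) hy0
    · rw [wK.v_mul _ _ hc'0 hy0, hc'v] at h; linarith
  · intro hy
    by_cases hy0 : y = 0
    · exact ⟨0, fun h => absurd rfl h, by simp [hy0]⟩
    · have hyv : m ≤ wK.v y := hy hy0
      set a : K := y / t with hadef
      have ha0 : a ≠ 0 := div_ne_zero hy0 ht0'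
      have hat : a * t = y := div_mul_cancel₀ y ht0'
      have hav : 0 ≤ wK.v a := by
        have := wK.v_mul a t ha0 ht0'
        rw [hat] at this
        linarith
      have haa : algebraMap K L a ≠ 0 := by simpa using ha0
      refine ⟨algebraMap K L a * z₀, fun _ => ?_, ?_⟩
      · rw [wL.v_mul _ _ haa hz₀0, hev a ha0]
        nlinarith
      · simp only
        rw [aux_tr', ← htdef, hat]
end
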